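/- Let b ≥ 2 and A = {pq : p, q primes, p > b^q}. Then the set S_b(A) = {(b^n mod n)/n : n ∈ A} is dense in [0,1]. -/

import Mathlib

set_option maxHeartbeats 2000000 in
theorem stmt_18 (b : ℕ) (hb : 2 ≤ b) :
    ∀ x ∈ Set.Icc (0 : ℝ) 1,
      x ∈ closure {y : ℝ | ∃ p q : ℕ, p.Prime ∧ q.Prime ∧ b ^ q < p ∧
        y = ((b ^ (p * q) % (p * q) : ℕ) : ℝ) / ((p * q : ℕ) : ℝ)} := by
  intro x hx
  obtain ⟨hx0, hx1⟩ := hx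
  rw [Metric.mem_closure_iff]
  intro ε hε
  -- Choose a large prime q
  obtain ⟨q, hqge, hq⟩ := Nat.exists_infinite_primes (max (b ^ 2 + 1) (⌈2 / ε⌉₊ + 1))
  have hb2 : 4 ≤ b ^ 2 := by nlinarith
  have hq2 : b ^ 2 < q := by have := le_max_left (b ^ 2 + 1) (⌈2 / ε⌉₊ + 1); omega
  have hqc : ⌈2 / ε⌉₊ < q := by have := le_max_right (b ^ 2 + 1) (⌈2 / ε⌉₊ + 1); omega
  have hq5 : 5 ≤ q := by omega
  have hbq : b < q := by nlinarith
  haveI : Fact q.Prime := ⟨hq⟩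
  have hb0 : (b : ZMod q) ≠ 0 := by
    intro h
    have := (ZMod.natCast_eq_zero_iff b q).mp h
    have := Nat.le_of_dvd (by omega) this
    omega
  -- the order of b mod q is at least 3
  set d := orderOf (b : ZMod q) with hd_def
  have hd_dvd : d ∣ q - 1 := orderOf_dvd_of_pow_eq_one (ZMod.pow_card_sub_one_eq_one hb0)
  have hd0 : d ≠ 0 := by
    intro h
    rw [h] at hd_dvd
    have := Nat.eq_zero_of_zero_dvd hd_dvd
    omega
  have hd3 : 3 ≤ d := by
    by_contra h
    have hd12 : d = 1 ∨ d = 2 := by omega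
    have hdvd2 : d ∣ 2 := by
      rcases hd12 with h | h
      · rw [h]; exact one_dvd 2
      · rw [h]
    have hpow : (b : ZMod q) ^ 2 = 1 := orderOf_dvd_iff_pow_eq_one.mp hdvd2
    have : ((b ^ 2 : ℕ) : ZMod q) = ((1 : ℕ) : ZMod q) := by push_cast; rw [hpow]
    have hmod := (ZMod.natCast_eq_natCast_iff _ _ _).mp this
    have : q ∣ b ^ 2 - 1 := (Nat.modEq_iff_dvd' (by omega)).mp hmod.symm
    have := Nat.le_of_dvd (by omega) this
    omega
  haveI : NeZero (q - 1) := ⟨by omega⟩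
  -- choose an exponent residue a, coprime to q-1, with a ≡ -1 mod d
  obtain ⟨w, hw⟩ := ZMod.unitsMap_surjective hd_dvd (-1)
  set a := ((w : ZMod (q - 1))).val with ha_def
  have haw : ((a : ℕ) : ZMod (q - 1)) = (w : ZMod (q - 1)) := ZMod.natCast_zmod_val _
  have had : ((a : ℕ) : ZMod d) = (-1 : ZMod d) := by
    have h1 : ((a : ℕ) : ZMod d) = ZMod.castHom hd_dvd (ZMod d) ((a : ℕ) : ZMod (q - 1)) :=
      (map_natCast _ a).symm
    rw [haw] at h1
    have h2 : (ZMod.castHom hd_dvd (ZMod d) (w : ZMod (q - 1)) : ZMod d)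
        = ((ZMod.unitsMap hd_dvd w : (ZMod d)ˣ) : ZMod d) := by
      rw [ZMod.unitsMap_def]; rfl
    rw [h1, h2, hw]
    simp
  have h2d : ¬ ((2 : ℕ) : ZMod d) = 0 := by
    intro h
    have := (ZMod.natCast_eq_zero_iff 2 d).mp h
    have := Nat.le_of_dvd (by norm_num) this
    omega
  have ha0 : a ≠ 0 := by
    intro h0
    rw [h0, Nat.cast_zero] at had
    have : ((2 : ℕ) : ZMod d) = 0 := by
      push_cast
      linear_combination (2 : ZMod d) * had
    exact h2d this
  -- b^a ≠ b in ZMod q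
  have hba : (b : ZMod q) ^ a ≠ (b : ZMod q) := by
    intro h
    have hstep : (b : ZMod q) ^ (a - 1) * (b : ZMod q) = (b : ZMod q) := by
      rw [← pow_succ]
      rw [show a - 1 + 1 = a by omega, h]
    have h1 : (b : ZMod q) ^ (a - 1) = 1 := by
      have := mul_right_cancel₀ hb0 (by rw [hstep, one_mul] : (b : ZMod q) ^ (a - 1) * (b : ZMod q) = 1 * (b : ZMod q))
      exact this
    obtain ⟨t, ht⟩ := orderOf_dvd_of_pow_eq_one h1
    rw [← hd_def] at ht
    have haq : ((a : ℕ) : ZMod d) = 1 := by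
      rw [show a = 1 + d * t by omega]
      push_cast
      simp [ZMod.natCast_self]
    rw [had] at haq
    have : ((2 : ℕ) : ZMod d) = 0 := by
      push_cast
      linear_combination -haq
    exact h2d this
  -- the target numerator k0
  set k0 : ℕ := min (max 1 ⌊x * q⌋₊) (q - 1) with hk0_def
  have hk0l : 1 ≤ k0 := by omega
  have hk0u : k0 ≤ q - 1 := by omega
  have hk0q : (k0 : ZMod q) ≠ 0 := by
    intro h
    have := (ZMod.natCast_eq_zero_iff k0 q).mp h
    have := Nat.le_of_dvd (by omega) this
    omega
  set c : ZMod q := ((b : ZMod q) ^ a - b) * (k0 : ZMod q)⁻¹ with hc_def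
  have hc0 : c ≠ 0 := mul_ne_zero (sub_ne_zero.mpr hba) (inv_ne_zero hk0q)
  -- CRT and Dirichlet
  have hco : Nat.Coprime (q - 1) q := by
    refine Nat.Coprime.symm ((Nat.Prime.coprime_iff_not_dvd hq).mpr ?_)
    intro hdvd
    have := Nat.le_of_dvd (by omega) hdvd
    omega
  haveI : NeZero ((q - 1) * q) := ⟨Nat.mul_ne_zero (by omega) (by omega)⟩
  set CR := ZMod.chineseRemainder hco with hCR_def
  set A : ZMod ((q - 1) * q) := CR.symm ((w : ZMod (q - 1)), c) with hA_def
  have hA : IsUnit A := by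
    have hpair : IsUnit ((w : ZMod (q - 1)), c) := by
      refine isUnit_iff_exists_inv.mpr ⟨((w⁻¹ : (ZMod (q - 1))ˣ), c⁻¹), ?_⟩
      refine Prod.ext ?_ ?_
      · simp [← Units.val_mul]
      · simpa using mul_inv_cancel₀ hc0
    exact hpair.map (CR.symm : ZMod (q - 1) × ZMod q →+* ZMod ((q - 1) * q))
  obtain ⟨p, hpgt, hp, hpA⟩ := Nat.forall_exists_prime_gt_and_eq_mod hA (b ^ q)
  -- extract the two congruences for p
  have hCRp : CR ((p : ℕ) : ZMod ((q - 1) * q)) = ((p : ZMod (q - 1)), (p : ZMod q)) := by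
    have h1 : CR ((p : ℕ) : ZMod ((q - 1) * q)) = ((p : ℕ) : ZMod (q - 1) × ZMod q) :=
      map_natCast (CR : ZMod ((q - 1) * q) →+* ZMod (q - 1) × ZMod q) p
    rw [h1]
    rfl
  have hpair : ((p : ZMod (q - 1)), (p : ZMod q)) = ((w : ZMod (q - 1)), c) := by
    rw [← hCRp, hpA, hA_def, RingEquiv.apply_symm_apply]
  have hp1 : (p : ZMod (q - 1)) = ((a : ℕ) : ZMod (q - 1)) := by
    rw [haw]; exact congrArg Prod.fst hpair
  have hp2 : (p : ZMod q) = c := congrArg Prod.snd hpair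
  have hpa : p ≡ a [MOD q - 1] := (ZMod.natCast_eq_natCast_iff _ _ _).mp hp1
  have hq1 : q ≡ 1 [MOD q - 1] := ((Nat.modEq_iff_dvd' (by omega)).mpr ⟨1, by omega⟩).symm
  have hpqa : p * q ≡ a [MOD d] := by
    have h := hpa.mul hq1
    rw [mul_one] at h
    exact h.of_dvd hd_dvd
  -- Fermat / CRT computation of b^(pq) mod pq
  haveI : Fact p.Prime := ⟨hp⟩
  have hq2p : q < 2 ^ q := Nat.lt_two_pow_self (n := q)
  have h2b : 2 ^ q ≤ b ^ q := Nat.pow_le_pow_left hb q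
  have hqp : q < p := by omega
  have hpq_ne : p ≠ q := by omega
  have hcop : Nat.Coprime p q := (Nat.coprime_primes hp hq).mpr hpq_ne
  set r := b ^ q + k0 * p with hr_def
  have hrn : r < p * q := by
    calc r < p + k0 * p := by omega
    _ = (1 + k0) * p := by ring
    _ ≤ q * p := Nat.mul_le_mul_right _ (by omega)
    _ = p * q := mul_comm _ _
  have hmodp : b ^ (p * q) ≡ r [MOD p] := by
    rw [← ZMod.natCast_eq_natCast_iff, hr_def]
    push_cast
    rw [pow_mul, ZMod.pow_card, ZMod.natCast_self]
    ring
  have hmodq : b ^ (p * q) ≡ r [MOD q] := by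
    rw [← ZMod.natCast_eq_natCast_iff, hr_def]
    push_cast
    rw [hp2, hc_def]
    have hav : a < q - 1 := ZMod.val_lt _
    have hqle : q ≤ p * q := Nat.le_mul_of_pos_left q hp.pos
    have hle : a ≤ p * q := by omega
    obtain ⟨t, ht⟩ := (Nat.modEq_iff_dvd' hle).mp hpqa.symm
    have hone : (b : ZMod q) ^ d = 1 := hd_def ▸ pow_orderOf_eq_one _
    have hL : (b : ZMod q) ^ (p * q) = (b : ZMod q) ^ a := by
      rw [show p * q = a + d * t by omega, pow_add, pow_mul, hone, one_pow, mul_one]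
    have hF : (b : ZMod q) ^ q = (b : ZMod q) := ZMod.pow_card _
    rw [hL, hF]
    have hinv : (k0 : ZMod q) * (k0 : ZMod q)⁻¹ = 1 := mul_inv_cancel₀ hk0q
    field_simp
    ring
  have hmod : b ^ (p * q) ≡ r [MOD p * q] :=
    (Nat.modEq_and_modEq_iff_modEq_mul hcop).mp ⟨hmodp, hmodq⟩
  have hval : b ^ (p * q) % (p * q) = r := by
    unfold Nat.ModEq at hmod
    rw [hmod, Nat.mod_eq_of_lt hrn]
  -- the candidate point
  refine ⟨((b ^ (p * q) % (p * q) : ℕ) : ℝ) / ((p * q : ℕ) : ℝ), ⟨p, q, hp, hq, hpgt, rfl⟩, ?_⟩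
  -- numeric estimates
  have hqR : (0 : ℝ) < q := by exact_mod_cast (by omega : 0 < q)
  have hpR : (0 : ℝ) < p := by exact_mod_cast (by omega : 0 < p)
  have hk0R : (0 : ℝ) < k0 := by exact_mod_cast (by omega : 0 < k0)
  have hy : ((b ^ (p * q) % (p * q) : ℕ) : ℝ) / ((p * q : ℕ) : ℝ)
      = (k0 : ℝ) / q + (b ^ q : ℝ) / (p * q) := by
    rw [show b ^ (p * q) % (p * q) = r from hval, hr_def]
    push_cast
    field_simp
    ring
  -- |x*q - k0| ≤ 1
  have hm1 : (⌊x * q⌋₊ : ℝ) ≤ x * q := Nat.floor_le (by positivity)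
  have hm2 : x * q < (⌊x * q⌋₊ : ℝ) + 1 := Nat.lt_floor_add_one _
  have hxqq : x * q ≤ q := by nlinarith
  have habs : |x * q - (k0 : ℝ)| ≤ 1 := by
    set m := ⌊x * q⌋₊ with hm_def
    rw [abs_le]
    have hcase : (k0 = m ∧ 1 ≤ m) ∨ (k0 = 1 ∧ m = 0) ∨ (k0 = q - 1 ∧ q - 1 ≤ m) := by omega
    rcases hcase with ⟨h1, h2⟩ | ⟨h1, h2⟩ | ⟨h1, h2⟩
    · have : (k0 : ℝ) = m := by exact_mod_cast congrArg (Nat.cast : ℕ → ℝ) h1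
      constructor <;> nlinarith
    · have : (k0 : ℝ) = 1 := by exact_mod_cast congrArg (Nat.cast : ℕ → ℝ) h1
      have : x * q < 1 := by
        have : (m : ℝ) = 0 := by exact_mod_cast congrArg (Nat.cast : ℕ → ℝ) h2
        nlinarith
      constructor <;> nlinarith [mul_nonneg hx0 hqR.le]
    · have hk0c : (k0 : ℝ) = (q : ℝ) - 1 := by
        rw [h1]
        have : (1 : ℕ) ≤ q := by omega
        push_cast [Nat.cast_sub this]
        ring
      have hmge : ((q : ℝ) - 1) ≤ (m : ℝ) := by
        have : ((q - 1 : ℕ) : ℝ) ≤ (m : ℝ) := by exact_mod_cast h2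
        rwa [Nat.cast_sub (by omega : (1:ℕ) ≤ q), Nat.cast_one] at this
      constructor <;> nlinarith
  have h1q : |x - (k0 : ℝ) / q| ≤ 1 / q := by
    have heq : x - (k0 : ℝ) / q = (x * q - k0) / q := by field_simp
    rw [heq, abs_div, abs_of_pos hqR]
    gcongr
  have hsmall : (b ^ q : ℝ) / (p * q) < 1 / q := by
    rw [div_lt_div_iff₀ (by positivity) hqR]
    have : (b ^ q : ℝ) < p := by exact_mod_cast hpgt
    nlinarith
  have hsmall0 : 0 ≤ (b ^ q : ℝ) / (p * q) := by positivity
  have h2e : 2 / (q : ℝ) < ε := by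
    have hceil : 2 / ε ≤ (⌈2 / ε⌉₊ : ℝ) := Nat.le_ceil _
    have hqc' : ((⌈2 / ε⌉₊ : ℕ) : ℝ) < q := by exact_mod_cast hqc
    rw [div_lt_iff₀ hqR]
    rw [div_le_iff₀ hε] at hceil
    nlinarith
  rw [Real.dist_eq, hy]
  have ht : |x - ((k0 : ℝ) / q + (b ^ q : ℝ) / (p * q))|
      ≤ |x - (k0 : ℝ) / q| + |(b ^ q : ℝ) / (p * q)| := by
    have hre : x - ((k0 : ℝ) / q + (b ^ q : ℝ) / (p * q))
        = (x - (k0 : ℝ) / q) + (-((b ^ q : ℝ) / (p * q))) := by ring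
    rw [hre]
    exact (abs_add_le _ _).trans (by rw [abs_neg])
  have habs2 : |(b ^ q : ℝ) / (p * q)| < 1 / q := by rwa [abs_of_nonneg hsmall0]
  have hsum : (1 : ℝ) / q + 1 / q = 2 / q := by ring
  linarith
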